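/- For ADMM iterates (U^k, V^k, P^k) as in the context, for every k ≥ 1 one has P^k = −∇h(V^k). Consequently, ‖P^{k+1} − P^k‖ = ‖∇h(V^{k+1}) − ∇h(V^k)‖ for all k ≥ 1. -/

import Mathlib

open scoped RealInnerProductSpace
open Filter

/-- Matrix–vector product `H U` as a map between Euclidean spaces. -/
noncomputable def mvec {M N : ℕ} (H : Matrix (Fin N) (Fin M) ℝ)
    (U : EuclideanSpace ℝ (Fin M)) : EuclideanSpace ℝ (Fin N) :=
  (WithLp.equiv 2 (Fin N → ℝ)).symm (H.mulVec (WithLp.equiv 2 (Fin M → ℝ) U))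

/-- The augmented Lagrangian
`L(U,V,P) = f(U) + h(V) + ⟨P, V − HU⟩ + (ρ/2)‖V − HU‖²`. -/
noncomputable def lagr {M N : ℕ} (H : Matrix (Fin N) (Fin M) ℝ) (ρ : ℝ)
    (f : EuclideanSpace ℝ (Fin M) → ℝ) (h : EuclideanSpace ℝ (Fin N) → ℝ)
    (U : EuclideanSpace ℝ (Fin M)) (V P : EuclideanSpace ℝ (Fin N)) : ℝ :=
  f U + h V + ⟪P, V - mvec H U⟫ + (ρ / 2) * ‖V - mvec H U‖ ^ 2

/-- The box constraint set `K = {U : 0 ≤ Uᵢ ≤ 1 for all i}`. -/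
def Kbox (M : ℕ) : Set (EuclideanSpace ℝ (Fin M)) := {U | ∀ i, 0 ≤ U i ∧ U i ≤ 1}



lemma min_grad_zero {N : ℕ} (ρ : ℝ) (h : EuclideanSpace ℝ (Fin N) → ℝ)
    (hdiff : Differentiable ℝ h) (A : ℝ) (c P0 Vs : EuclideanSpace ℝ (Fin N))
    (hmin : ∀ V', A + h Vs + ⟪P0, Vs - c⟫ + (ρ / 2) * ‖Vs - c‖ ^ 2 ≤
      A + h V' + ⟪P0, V' - c⟫ + (ρ / 2) * ‖V' - c‖ ^ 2) :
    gradient h Vs + P0 + ρ • (Vs - c) = 0 := by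
  set g : EuclideanSpace ℝ (Fin N) → ℝ :=
    fun V => A + h V + ⟪P0, V - c⟫ + (ρ / 2) * ‖V - c‖ ^ 2 with hg
  have h1 : HasFDerivAt h (InnerProductSpace.toDual ℝ _ (gradient h Vs)) Vs :=
    ((hdiff Vs).hasGradientAt).hasFDerivAt
  have h2 : HasFDerivAt (fun V : EuclideanSpace ℝ (Fin N) => ⟪P0, V - c⟫)
      (innerSL ℝ P0) Vs := by
    have heq : (fun V : EuclideanSpace ℝ (Fin N) => ⟪P0, V - c⟫)
        = fun V => (innerSL ℝ P0) V - ⟪P0, c⟫ := by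
      funext V; simp [inner_sub_right]
    rw [heq]
    exact ((innerSL ℝ P0).hasFDerivAt).sub_const _
  have h3 : HasFDerivAt (fun V : EuclideanSpace ℝ (Fin N) => ‖V - c‖ ^ 2)
      (2 • innerSL ℝ (Vs - c)) Vs := by
    simpa using ((hasFDerivAt_id Vs).sub_const c).norm_sq
  have hD : HasFDerivAt g
      ((InnerProductSpace.toDual ℝ _ (gradient h Vs) + innerSL ℝ P0)
        + (ρ / 2) • (2 • innerSL ℝ (Vs - c))) Vs := by
    have := (((hasFDerivAt_const A Vs).add h1).add h2).add (h3.const_mul (ρ / 2))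
    rw [zero_add] at this
    exact this
  have hloc : IsLocalMin g Vs := Filter.Eventually.of_forall hmin
  have h0 : ((InnerProductSpace.toDual ℝ _ (gradient h Vs) + innerSL ℝ P0)
        + (ρ / 2) • (2 • innerSL ℝ (Vs - c))) = 0 := by
    rw [← hD.fderiv]; exact hloc.fderiv_eq_zero
  have hy : ∀ y : EuclideanSpace ℝ (Fin N),
      ⟪gradient h Vs + P0 + ρ • (Vs - c), y⟫ = 0 := by
    intro y
    have := congrFun (congrArg DFunLike.coe h0) y
    simp only [ContinuousLinearMap.add_apply, ContinuousLinearMap.smul_apply,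
      ContinuousLinearMap.zero_apply, innerSL_apply_apply, InnerProductSpace.toDual_apply_apply,
      two_smul, smul_eq_mul] at this
    rw [inner_add_left, inner_add_left, real_inner_smul_left]
    linear_combination this
  have := hy (gradient h Vs + P0 + ρ • (Vs - c))
  exact inner_self_eq_zero.mp this

/-- For ADMM iterates, `P^k = −∇h(V^k)` for every `k ≥ 1`, and consequently
`‖P^{k+1} − P^k‖ = ‖∇h(V^{k+1}) − ∇h(V^k)‖` for all `k ≥ 1`. -/
theorem admm_multiplier_eq_neg_gradient
    {M N : ℕ} (H : Matrix (Fin N) (Fin M) ℝ) (ρ Lh : ℝ)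
    (hρ : 0 < ρ) (hLh : 0 < Lh)
    (f : EuclideanSpace ℝ (Fin M) → ℝ) (h : EuclideanSpace ℝ (Fin N) → ℝ)
    (hdiff : Differentiable ℝ h)
    (hlip : ∀ V W : EuclideanSpace ℝ (Fin N),
      ‖gradient h V - gradient h W‖ ≤ Lh * ‖V - W‖)
    (U : ℕ → EuclideanSpace ℝ (Fin M)) (V P : ℕ → EuclideanSpace ℝ (Fin N))
    (hUK : ∀ k, U k ∈ Kbox M)
    (hUmin : ∀ k, ∀ U' ∈ Kbox M,
      lagr H ρ f h (U (k+1)) (V k) (P k) ≤ lagr H ρ f h U' (V k) (P k))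
    (hVmin : ∀ k, ∀ V' : EuclideanSpace ℝ (Fin N),
      lagr H ρ f h (U (k+1)) (V (k+1)) (P k) ≤ lagr H ρ f h (U (k+1)) V' (P k))
    (hPup : ∀ k, P (k+1) = P k + ρ • (V (k+1) - mvec H (U (k+1))))
    :
    (∀ k : ℕ, 1 ≤ k → P k = -gradient h (V k)) ∧
      (∀ k : ℕ, 1 ≤ k →
        ‖P (k+1) - P k‖ = ‖gradient h (V (k+1)) - gradient h (V k)‖) := by
  
  have key : ∀ k : ℕ, P (k+1) = -gradient h (V (k+1)) := by
    intro k
    have h0 := min_grad_zero ρ h hdiff (f (U (k+1))) (mvec H (U (k+1))) (P k) (V (k+1))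
      (fun V' => hVmin k V')
    rw [hPup k]
    rw [add_assoc] at h0
    exact eq_neg_of_add_eq_zero_right h0
  have first : ∀ k : ℕ, 1 ≤ k → P k = -gradient h (V k) := by
    intro k hk
    cases k with
    | zero => omega
    | succ j => exact key j
  refine ⟨first, fun k hk => ?_⟩
  rw [key k, first k hk]
  rw [show -gradient h (V (k+1)) - -gradient h (V k)
      = -(gradient h (V (k+1)) - gradient h (V k)) by abel]
  exact norm_neg _
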